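/- Let S ⊆ ℝⁿ be nonempty and compact, let g ∈ ℤⁿ have relatively prime entries, and let γ ∈ ℝ be such that g·x ≥ γ for every x ∈ S (so that g·x ≥ ⌈γ⌉ is a Chvátal–Gomory inequality for S) and such that g·x < ⌈γ⌉ for at least one x ∈ S (the inequality is proper). Then there exists a unimodular integer matrix C with first row g such that, denoting by x̄ the lexicographically minimum point of S with respect to the order ⪯_C induced by the rows of C, one has g·x̄ ∉ ℤ and ⌈g·x̄⌉ = ⌈γ⌉; consequently the first lex-cut g·x ≥ ⌈g·x̄⌉ generated from x̄ coincides with the Chvátal–Gomory inequality g·x ≥ ⌈γ⌉. -/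

import Mathlib

/-- Dot product of an integer vector with a real vector. -/
def rdot {n : ℕ} (c : Fin n → ℤ) (x : Fin n → ℝ) : ℝ := ∑ j, (c j : ℝ) * x j

/-- Lexicographic strict order associated with the lattice basis given by the rows of `C`. -/
def lexLtC {n : ℕ} (C : Matrix (Fin n) (Fin n) ℤ) (x y : Fin n → ℝ) : Prop :=
  ∃ i : Fin n, rdot (C i) x < rdot (C i) y ∧ ∀ j : Fin n, j < i → rdot (C j) x = rdot (C j) y

/-- `x ⪯_C y` iff `x ≺_C y` or `x = y`. -/
def lexLeC {n : ℕ} (C : Matrix (Fin n) (Fin n) ℤ) (x y : Fin n → ℝ) : Prop :=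
  lexLtC C x y ∨ x = y

/-- Bezout for finset gcd over ℤ. -/
lemma finset_gcd_bezout {ι : Type*} [DecidableEq ι] (s : Finset ι) (f : ι → ℤ) :
    ∃ a : ι → ℤ, ∑ j ∈ s, a j * f j = s.gcd f := by
  induction s using Finset.induction_on with
  | empty => exact ⟨0, by simp⟩
  | @insert i s hi ih =>
    obtain ⟨a, ha⟩ := ih
    refine ⟨fun j => if j = i then Int.gcdA (f i) (s.gcd f)
      else Int.gcdB (f i) (s.gcd f) * a j, ?_⟩
    rw [Finset.sum_insert hi, Finset.gcd_insert]
    have hrec : ∀ j ∈ s, (if j = i then Int.gcdA (f i) (s.gcd f)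
        else Int.gcdB (f i) (s.gcd f) * a j) * f j
        = Int.gcdB (f i) (s.gcd f) * (a j * f j) := by
      intro j hj
      rw [if_neg (by rintro rfl; exact hi hj), mul_assoc]
    rw [Finset.sum_congr rfl hrec, ← Finset.mul_sum, ha]
    beta_reduce
    rw [if_pos rfl, ← Int.coe_gcd, Int.gcd_eq_gcd_ab (f i) (s.gcd f)]
    ring

/-- A primitive integer vector is the first row of a unimodular matrix. -/
lemma exists_unimodular {n : ℕ} (hn : 0 < n) (g : Fin n → ℤ)
    (hg : Finset.univ.gcd g = 1) :
    ∃ C : Matrix (Fin n) (Fin n) ℤ, (C.det = 1 ∨ C.det = -1) ∧ C ⟨0, hn⟩ = g := by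
  obtain ⟨a, ha⟩ := finset_gcd_bezout Finset.univ g
  rw [hg] at ha
  let φ : (Fin n → ℤ) →ₗ[ℤ] ℤ :=
    { toFun := fun x => ∑ j, a j * x j
      map_add' := by intro x y; simp [mul_add, Finset.sum_add_distrib]
      map_smul' := by
        intro c x
        simp [Finset.mul_sum, smul_eq_mul, mul_left_comm] }
  have hφg : φ g = 1 := ha
  have hker : ∀ x : Fin n → ℤ, x - φ x • g ∈ LinearMap.ker φ := by
    intro x
    rw [LinearMap.mem_ker, map_sub, map_smul, hφg, smul_eq_mul, mul_one, sub_self]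
  let e : (Fin n → ℤ) ≃ₗ[ℤ] ↥(LinearMap.ker φ) × ℤ :=
    { toFun := fun x => (⟨x - φ x • g, hker x⟩, φ x)
      invFun := fun p => (p.1 : Fin n → ℤ) + p.2 • g
      left_inv := by intro x; simp
      right_inv := by
        rintro ⟨⟨y, hy⟩, c⟩
        rw [LinearMap.mem_ker] at hy
        have h1 : φ (y + c • g) = c := by
          rw [map_add, hy, map_smul, hφg, smul_eq_mul, mul_one, zero_add]
        refine Prod.ext (Subtype.ext ?_) h1
        show (y + c • g) - φ (y + c • g) • g = y
        rw [h1, add_sub_cancel_right]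
      map_add' := by
        intro x y
        have h2 : φ (x + y) = φ x + φ y := map_add φ x y
        refine Prod.ext (Subtype.ext ?_) h2
        show (x + y) - φ (x + y) • g = (x - φ x • g) + (y - φ y • g)
        rw [h2, add_smul]
        abel
      map_smul' := by
        intro c x
        have h2 : φ (c • x) = c * φ x := by rw [map_smul, smul_eq_mul]
        refine Prod.ext (Subtype.ext ?_) ?_
        · show c • x - φ (c • x) • g = c • (x - φ x • g)
          rw [h2, smul_sub, mul_smul]
        · show φ (c • x) = c * φ x
          exact h2 }
  haveI : Module.Finite ℤ ↥(LinearMap.ker φ) :=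
    Module.Finite.iff_fg.mpr (IsNoetherian.noetherian _)
  let b0 := Module.Free.chooseBasis ℤ ↥(LinearMap.ker φ)
  let bProd := b0.prod (Module.Basis.singleton Unit ℤ)
  let B0 := bProd.map e.symm
  have hB0 : B0 (Sum.inr ()) = g := by
    show e.symm (bProd (Sum.inr ())) = g
    have : bProd (Sum.inr ()) = (0, 1) := by
      ext <;> simp [bProd, Module.Basis.prod_apply, Module.Basis.singleton_apply]
    rw [this]
    show ((0 : ↥(LinearMap.ker φ)) : Fin n → ℤ) + (1 : ℤ) • g = g
    simp
  let eqv := B0.indexEquiv (Pi.basisFun ℤ (Fin n))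
  let B := B0.reindex eqv
  have hB : B (eqv (Sum.inr ())) = g := by
    rw [Module.Basis.reindex_apply, Equiv.symm_apply_apply, hB0]
  let B' := B.reindex (Equiv.swap (eqv (Sum.inr ())) ⟨0, hn⟩)
  have hB' : B' ⟨0, hn⟩ = g := by
    rw [Module.Basis.reindex_apply, Equiv.symm_swap, Equiv.swap_apply_right, hB]
  refine ⟨Matrix.of (fun i j => B' i j), ?_,
    funext fun j => by simp only [Matrix.of_apply]; rw [hB']⟩
  have hCT : Matrix.of (fun i j => B' i j) =
      Matrix.transpose ((Pi.basisFun ℤ (Fin n)).toMatrix ⇑B') := by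
    ext i j
    simp [Matrix.transpose_apply, Module.Basis.toMatrix_apply]
  rw [hCT, Matrix.det_transpose]
  haveI := (Pi.basisFun ℤ (Fin n)).invertibleToMatrix B'
  exact Int.isUnit_iff.mp (Matrix.isUnit_det_of_invertible _)

/-- Let `S ⊆ ℝⁿ` be nonempty compact, `g ∈ ℤⁿ` with relatively prime entries, and `γ ∈ ℝ`
with `g·x ≥ γ` valid for `S` and `g·x ≥ ⌈γ⌉` violated by some point of `S` (a proper
Chvátal–Gomory inequality). Then there is a unimodular integer matrix `C` with first row
`g` such that the lex-min point `x̄` of `S` w.r.t. `⪯_C` satisfies `g·x̄ ∉ ℤ` and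
`⌈g·x̄⌉ = ⌈γ⌉`, i.e. the first lex-cut `g·x ≥ ⌈g·x̄⌉` coincides with `g·x ≥ ⌈γ⌉`. -/
theorem stmt13 {n : ℕ} (hn : 0 < n) (S : Set (Fin n → ℝ)) (hne : S.Nonempty)
    (hcomp : IsCompact S)
    (g : Fin n → ℤ) (hg : Finset.univ.gcd g = 1)
    (γ : ℝ) (hvalid : ∀ x ∈ S, γ ≤ rdot g x)
    (hproper : ∃ x ∈ S, rdot g x < (⌈γ⌉ : ℝ)) :
    ∃ C : Matrix (Fin n) (Fin n) ℤ, (C.det = 1 ∨ C.det = -1) ∧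
      C ⟨0, hn⟩ = g ∧
      ∀ xb : Fin n → ℝ, xb ∈ S → (∀ x ∈ S, lexLeC C xb x) →
        (¬ ∃ z : ℤ, rdot g xb = (z : ℝ)) ∧ ⌈rdot g xb⌉ = ⌈γ⌉ := by
  obtain ⟨C, hdet, hrow⟩ := exists_unimodular hn g hg
  refine ⟨C, hdet, hrow, ?_⟩
  intro xb hxb hmin
  obtain ⟨x, hxS, hx⟩ := hproper
  have hle : rdot g xb ≤ rdot g x := by
    rcases hmin x hxS with h | rfl
    · obtain ⟨i, hi, hj⟩ := h
      by_cases h0 : i = ⟨0, hn⟩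
      · subst h0; rw [hrow] at hi; exact hi.le
      · have hpos : 0 < i.val := Nat.pos_of_ne_zero fun h => h0 (Fin.ext h)
        have := hj ⟨0, hn⟩ (by simpa [Fin.lt_def] using hpos)
        rw [hrow] at this
        exact this.le
    · exact le_refl _
  have h1 : rdot g xb < (⌈γ⌉ : ℝ) := lt_of_le_of_lt hle hx
  have h2 : γ ≤ rdot g xb := hvalid xb hxb
  constructor
  · rintro ⟨z, hz⟩
    have hzle : (⌈γ⌉ : ℤ) ≤ z := Int.ceil_le.mpr (hz ▸ h2)
    have hzlt : z < ⌈γ⌉ := Int.cast_lt.mp (hz ▸ h1)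
    omega
  · refine le_antisymm (Int.ceil_le.mpr h1.le) (Int.ceil_le_ceil h2)
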